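/- In any semigroup S, if a ∼ₚ b and b is a group element (belongs to some subgroup of S), then a² is a group element. -/
import Mathlib


variable {S : Type*} [Semigroup S]

/-- Primary conjugacy: `a = x*y` and `b = y*x` for some `x, y`. -/
def PConj (a b : S) : Prop := ∃ x y : S, a = x * y ∧ b = y * x

/-- Conjugacy: the transitive closure of primary conjugacy. -/
def SConj : S → S → Prop := Relation.TransGen PConj

/-- `pw a n` is `a ^ n` for `n ≥ 1` (with junk value `a` at `n = 0`). -/
def pw (a : S) : ℕ → S
  | 0 => a
  | 1 => a
  | n + 2 => pw a (n + 1) * a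

/-- An element is a group element iff it lies in some subgroup of `S`:
there is an idempotent `e` acting as identity on `a`, and an inverse of `a`
relative to `e`. -/
def IsGroupElement (a : S) : Prop :=
  ∃ e b : S, e * e = e ∧ e * a = a ∧ a * e = a ∧ a * b = e ∧ b * a = e

/-- An element is group-bound if some positive power is a group element. -/
def GroupBound (a : S) : Prop := ∃ n : ℕ, 1 ≤ n ∧ IsGroupElement (pw a n)

/-- Green's L-relation: same principal left ideal in `S¹`. -/
def LRel (a b : S) : Prop :=
  (∃ u : WithOne S, u * (a : WithOne S) = (b : WithOne S)) ∧
  (∃ u : WithOne S, u * (b : WithOne S) = (a : WithOne S))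

/-- Green's R-relation: same principal right ideal in `S¹`. -/
def RRel (a b : S) : Prop :=
  (∃ u : WithOne S, (a : WithOne S) * u = (b : WithOne S)) ∧
  (∃ u : WithOne S, (b : WithOne S) * u = (a : WithOne S))

/-- Green's H-relation. -/
def HRel (a b : S) : Prop := LRel a b ∧ RRel a b

/-- Green's D-relation. -/
def DRel (a b : S) : Prop := ∃ c : S, LRel a c ∧ RRel c b

private lemma key_assoc (x y p q : S) :
    ((x * p) * y) * ((x * q) * y) = (x * ((p * (y * x)) * q)) * y := by
  simp only [mul_assoc]

theorem square_group_element_of_pconj (a b : S) (h : PConj a b)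
    (hb : IsGroupElement b) : IsGroupElement (pw a 2) := by
  obtain ⟨x, y, hxy, hyx⟩ := h
  obtain ⟨e, c, hee, heb, hbe, hbc, hcb⟩ := hb
  -- normalized inverse of b
  set d : S := (e * c) * e with hd
  have hed : e * d = d := by
    rw [hd, ← mul_assoc, ← mul_assoc, hee]
  have hde : d * e = d := by
    rw [hd, mul_assoc, hee]
  have hbd : b * d = e := by
    rw [hd, ← mul_assoc, ← mul_assoc, hbe, hbc, hee]
  have hdb : d * b = e := by
    rw [hd, mul_assoc, heb, mul_assoc, hcb, hee]
  have hsq : pw a 2 = (x * b) * y := by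
    show a * a = (x * b) * y
    rw [hxy, hyx]
    simp only [mul_assoc]
  rw [hsq]
  refine ⟨(x * d) * y, (x * (d * (d * d))) * y, ?_, ?_, ?_, ?_, ?_⟩
  · rw [key_assoc, ← hyx, hdb, hed]
  · rw [key_assoc, ← hyx, hdb, heb]
  · rw [key_assoc, ← hyx]
    have : (b * b) * d = b := by rw [mul_assoc, hbd, hbe]
    rw [this]
  · rw [key_assoc, ← hyx]
    have : (b * b) * (d * (d * d)) = d := by
      rw [mul_assoc b b (d * (d * d)), ← mul_assoc b d (d * d), hbd,
        ← mul_assoc e d d, hed, ← mul_assoc b d d, hbd, hed]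
    rw [this]
  · rw [key_assoc, ← hyx]
    have : ((d * (d * d)) * b) * b = d := by
      rw [mul_assoc (d * (d * d)) b b, mul_assoc d (d * d) (b * b),
        mul_assoc d d (b * b), ← mul_assoc d b b, hdb, heb, hdb, hde]
    rw [this]
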